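/- Let R be a (not necessarily commutative) ring, ζ ∈ R central, and x, y ∈ R with x² = 1 + ζx and y² = 1 + ζy. Define the m-th braid commutator Δ_m(x,y) := xyx⋯ (m factors) − yxy⋯ (m factors), and τ_r as the recursion τ_{-1}=0, τ_0=1, τ_r = T·τ_{r-1} − τ_{r-2}. Then for all r ≥ 0, Δ_{r+1}(x,y) = (−1)^r · τ_r(x + y − ζ) · (x − y). -/
import Mathlib


open Polynomial

/-- The polynomials τ_r ∈ ℤ[T] defined by τ_{-1} = 0, τ_0 = 1, τ_r = T·τ_{r-1} − τ_{r-2}. -/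
noncomputable def tau : ℕ → Polynomial ℤ
  | 0 => 1
  | 1 => X
  | (n + 2) => X * tau (n + 1) - tau n

/-- The alternating product with m factors: `altProd m x y = x·y·x·⋯` (m factors). -/
def altProd {R : Type*} [Ring R] : ℕ → R → R → R
  | 0, _, _ => 1
  | (n + 1), x, y => x * altProd n y x

/-- The m-th braid commutator Δ_m(x,y) = xyx⋯ (m factors) − yxy⋯ (m factors). -/
def braidComm {R : Type*} [Ring R] (m : ℕ) (x y : R) : R :=
  altProd m x y - altProd m y x

private lemma step_arith {R : Type*} [Ring R] (c s T1 T0 d : R) (h : s * c = c * s) :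
    -(s * (c * -1 * T1 * d)) - c * T0 * d = c * -1 * -1 * (s * T1 - T0) * d := by
  have e : s * (c * -1 * T1 * d) = s * c * (-1 * T1 * d) := by noncomm_ring
  rw [e, h]
  noncomm_ring

/-- If ζ is central and x² = 1 + ζx, y² = 1 + ζy, then for all r ≥ 0,
Δ_{r+1}(x,y) = (−1)^r · τ_r(x + y − ζ) · (x − y). -/
theorem braidComm_eq_tau {R : Type*} [Ring R] (ζ x y : R)
    (hζ : ∀ a : R, ζ * a = a * ζ)
    (hx : x ^ 2 = 1 + ζ * x) (hy : y ^ 2 = 1 + ζ * y) (r : ℕ) :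
    braidComm (r + 1) x y = (-1) ^ r * (Polynomial.aeval (x + y - ζ) (tau r)) * (x - y) := by
  have hxx : x * x = 1 + ζ * x := by rw [← sq]; exact hx
  have hyy : y * y = 1 + ζ * y := by rw [← sq]; exact hy
  have hsx : (x + y - ζ) * x = 1 + y * x := by
    rw [sub_mul, add_mul, hxx]; abel
  have hsy : (x + y - ζ) * y = 1 + x * y := by
    rw [sub_mul, add_mul, hyy]; abel
  have hd : (x + y - ζ) * (x - y) = y * x - x * y := by
    rw [mul_sub, hsx, hsy]; abel
  induction r using Nat.twoStepInduction with
  | zero =>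
    simp [braidComm, altProd, tau]
  | one =>
    have e : braidComm 2 x y = x * y - y * x := by
      simp [braidComm, altProd]
    rw [e]
    simp only [tau, aeval_X, pow_one]
    rw [show (-1 : R) * (x + y - ζ) * (x - y) = -((x + y - ζ) * (x - y)) by noncomm_ring, hd]
    noncomm_ring
  | more n ih1 ih2 =>
    have key : braidComm (n + 2 + 1) x y
        = -((x + y - ζ) * braidComm (n + 1 + 1) x y) - braidComm (n + 1) x y := by
      simp only [braidComm, altProd]
      generalize altProd n x y = A
      generalize altProd n y x = B
      rw [mul_sub, ← mul_assoc (x + y - ζ) x, ← mul_assoc (x + y - ζ) y, hsx, hsy]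
      noncomm_ring
    rw [key, ih1 , ih2]
    have ht : (aeval (x + y - ζ) (tau (n + 2)) : R)
        = (x + y - ζ) * aeval (x + y - ζ) (tau (n + 1)) - aeval (x + y - ζ) (tau n) := by
      simp only [tau, map_sub, map_mul, aeval_X]
    rw [ht]
    have hcs : (x + y - ζ) * (-1 : R) ^ n = (-1 : R) ^ n * (x + y - ζ) :=
      ((Commute.neg_one_left (x + y - ζ)).pow_left n).eq.symm
    simp only [pow_succ]
    exact step_arith _ _ _ _ _ hcs
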